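/- Let b ∈ ℝ^K and c ∈ ℝ^N be independent random vectors with i.i.d. N(0,1) entries, and let ĥ, δh ∈ ℝ^K and m̂, δm ∈ ℝ^N be fixed. Then E[(bᵀĥ·cᵀδm + bᵀδh·cᵀm̂)²] = ‖δm‖₂²·‖ĥ‖₂² + ‖m̂‖₂²·‖δh‖₂² + 2(δmᵀm̂)(δhᵀĥ). In particular, if δhᵀĥ = δmᵀm̂, then E[(bᵀĥ·cᵀδm + bᵀδh·cᵀm̂)²] ≥ min{‖ĥ‖₂², ‖m̂‖₂²}·(‖δh‖₂² + ‖δm‖₂²). -/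

import Mathlib

open MeasureTheory ProbabilityTheory

noncomputable section

section AuxiliaryLemmas

open Real Set Filter
open scoped ENNReal NNReal


lemma sq_exp_int {b : ℝ} (hb : 0 < b) :
    Integrable (fun x : ℝ => x ^ 2 * Real.exp (-b * x ^ 2)) := by
  have h := integrable_rpow_mul_exp_neg_mul_sq hb (show (-1:ℝ) < ((2:ℕ):ℝ) by norm_num)
  have : (fun x : ℝ => x ^ ((2:ℕ):ℝ) * Real.exp (-b * x ^ 2))
      = fun x : ℝ => x ^ 2 * Real.exp (-b * x ^ 2) := by
    funext x; rw [Real.rpow_natCast]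
  rwa [this] at h

lemma odd_integral_zero : ∫ x : ℝ, x * Real.exp (-(1/2) * x ^ 2) = 0 := by
  have h := integral_neg_eq_self (fun x : ℝ => x * Real.exp (-(1/2) * x ^ 2)) volume
  have h2 : ∫ x : ℝ, (-x) * Real.exp (-(1/2) * (-x) ^ 2)
      = - ∫ x : ℝ, x * Real.exp (-(1/2) * x ^ 2) := by
    rw [← integral_neg]
    congr 1; funext x; simp [neg_mul]
  rw [h2] at h
  linarith

lemma Ioi_sq_eq : ∫ x in Ioi (0:ℝ), x ^ 2 * Real.exp (-(1/2) * x ^ 2)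
    = ∫ x in Ioi (0:ℝ), Real.exp (-(1/2) * x ^ 2) := by
  set F : ℝ → ℝ := fun x => -(x * Real.exp (-(1/2) * x ^ 2)) with hF
  have hderiv : ∀ x ∈ Ici (0:ℝ), HasDerivAt F
      (x ^ 2 * Real.exp (-(1/2) * x ^ 2) - Real.exp (-(1/2) * x ^ 2)) x := by
    intro x _
    have h1 : HasDerivAt (fun x : ℝ => -(1/2) * x ^ 2) (-(1/2) * (2 * x)) x := by
      simpa using ((hasDerivAt_pow 2 x).const_mul (-(1/2):ℝ))
    have h2 : HasDerivAt (fun x : ℝ => Real.exp (-(1/2) * x ^ 2))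
        (Real.exp (-(1/2) * x ^ 2) * (-(1/2) * (2 * x))) x := h1.exp
    have h3 := ((hasDerivAt_id x).mul h2).neg
    refine h3.congr_deriv ?_
    simp only [id]
    ring
  have hint : IntegrableOn (fun x : ℝ =>
      x ^ 2 * Real.exp (-(1/2) * x ^ 2) - Real.exp (-(1/2) * x ^ 2)) (Ioi 0) :=
    ((sq_exp_int (by norm_num)).sub (integrable_exp_neg_mul_sq (by norm_num))).integrableOn
  have htend : Tendsto F atTop (nhds 0) := by
    have hlo := rpow_mul_exp_neg_mul_sq_isLittleO_exp_neg (show (0:ℝ) < 1/2 by norm_num) 1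
    have h0 : Tendsto (fun x : ℝ => Real.exp (-(1/2) * x)) atTop (nhds 0) :=
      Real.tendsto_exp_atBot.comp (tendsto_id.const_mul_atTop_of_neg (by norm_num))
    have hll := hlo.trans_tendsto h0
    have heq : (fun x : ℝ => x ^ (1:ℝ) * Real.exp (-(1/2) * x ^ 2)) =ᶠ[atTop]
        fun x => x * Real.exp (-(1/2) * x ^ 2) := by
      filter_upwards [eventually_ge_atTop (0:ℝ)] with x hx
      rw [Real.rpow_one]
    have hll2 := hll.congr' heq
    simpa [F] using hll2.neg
  have h := integral_Ioi_of_hasDerivAt_of_tendsto' hderiv hint htend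
  have hF0 : F 0 = 0 := by simp [F]
  rw [hF0, sub_zero] at h
  have hs : ∫ x in Ioi (0:ℝ), (x ^ 2 * Real.exp (-(1/2) * x ^ 2) - Real.exp (-(1/2) * x ^ 2))
      = (∫ x in Ioi (0:ℝ), x ^ 2 * Real.exp (-(1/2) * x ^ 2))
        - ∫ x in Ioi (0:ℝ), Real.exp (-(1/2) * x ^ 2) :=
    integral_sub ((sq_exp_int (show (0:ℝ)<1/2 by norm_num)).integrableOn)
      ((integrable_exp_neg_mul_sq (show (0:ℝ)<1/2 by norm_num)).integrableOn)
  rw [hs] at h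
  linarith

lemma sq_integral_val : ∫ x : ℝ, x ^ 2 * Real.exp (-(1/2) * x ^ 2) = Real.sqrt (2 * π) := by
  have h1 : ∫ x : ℝ, x ^ 2 * Real.exp (-(1/2) * x ^ 2)
      = 2 * ∫ x in Ioi (0:ℝ), x ^ 2 * Real.exp (-(1/2) * x ^ 2) := by
    rw [← integral_comp_abs (f := fun x => x ^ 2 * Real.exp (-(1/2) * x ^ 2))]
    congr 1; funext x; rw [sq_abs]
  have h2 : ∫ x : ℝ, Real.exp (-(1/2) * x ^ 2)
      = 2 * ∫ x in Ioi (0:ℝ), Real.exp (-(1/2) * x ^ 2) := by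
    rw [← integral_comp_abs (f := fun x => Real.exp (-(1/2) * x ^ 2))]
    congr 1; funext x; rw [sq_abs]
  have h3 := integral_gaussian (1/2)
  rw [show π / (1/2) = 2 * π by ring] at h3
  rw [h1, Ioi_sq_eq, ← h2, h3]




lemma pdf01_eq : gaussianPDFReal 0 1
    = fun x => (Real.sqrt (2 * π))⁻¹ * Real.exp (-(1/2) * x ^ 2) := by
  funext x
  simp only [gaussianPDFReal, NNReal.coe_one, mul_one, sub_zero]
  congr 1
  ring

lemma gauss01_withDensity : gaussianReal 0 1
    = volume.withDensity (fun x => ((gaussianPDFReal 0 1 x).toNNReal : ℝ≥0∞)) := by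
  rw [gaussianReal_of_var_ne_zero 0 one_ne_zero]
  rfl

lemma integral_gauss01 (g : ℝ → ℝ) :
    ∫ x, g x ∂(gaussianReal 0 1)
      = (Real.sqrt (2 * π))⁻¹ * ∫ x : ℝ, Real.exp (-(1/2) * x ^ 2) * g x := by
  rw [gauss01_withDensity,
    integral_withDensity_eq_integral_smul₀
      ((measurable_gaussianPDFReal 0 1).real_toNNReal.aemeasurable) g]
  rw [← integral_const_mul]
  congr 1; funext x
  rw [NNReal.smul_def, Real.coe_toNNReal _ (gaussianPDFReal_nonneg 0 1 x), pdf01_eq]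
  simp only [smul_eq_mul]
  ring

lemma integrable_gauss01 (g : ℝ → ℝ)
    (hg : Integrable (fun x : ℝ => Real.exp (-(1/2) * x ^ 2) * g x)) :
    Integrable g (gaussianReal 0 1) := by
  rw [gauss01_withDensity,
    integrable_withDensity_iff_integrable_smul ((measurable_gaussianPDFReal 0 1).real_toNNReal)]
  have := hg.const_mul ((Real.sqrt (2 * π))⁻¹)
  apply this.congr
  filter_upwards with x
  rw [NNReal.smul_def, Real.coe_toNNReal _ (gaussianPDFReal_nonneg 0 1 x), pdf01_eq]
  simp only [smul_eq_mul]
  ring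

lemma gauss01_integrable_id : Integrable (fun x : ℝ => x) (gaussianReal 0 1) := by
  apply integrable_gauss01
  have := integrable_mul_exp_neg_mul_sq (show (0:ℝ) < 1/2 by norm_num)
  apply this.congr
  filter_upwards with x
  ring_nf

lemma gauss01_integrable_sq : Integrable (fun x : ℝ => x * x) (gaussianReal 0 1) := by
  apply integrable_gauss01
  have := sq_exp_int (show (0:ℝ) < 1/2 by norm_num)
  apply this.congr
  filter_upwards with x
  ring_nf

lemma gauss01_mean : ∫ x, x ∂(gaussianReal 0 1) = 0 := by
  rw [integral_gauss01]
  have : ∫ x : ℝ, Real.exp (-(1/2) * x ^ 2) * x = 0 := by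
    rw [← odd_integral_zero]
    congr 1; funext x; ring
  rw [this, mul_zero]

lemma gauss01_sq : ∫ x, x * x ∂(gaussianReal 0 1) = 1 := by
  rw [integral_gauss01]
  have : ∫ x : ℝ, Real.exp (-(1/2) * x ^ 2) * (x * x) = Real.sqrt (2 * π) := by
    rw [← sq_integral_val]
    congr 1; funext x; ring
  rw [this]
  rw [inv_mul_cancel₀]
  positivity



lemma iIndepFun_congr {ι : Type*} [Countable ι] {Ω : Type*} [MeasureSpace Ω]
    {X Y : ι → Ω → ℝ}
    (h : iIndepFun X ℙ) (hae : ∀ i, X i =ᵐ[ℙ] Y i) :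
    iIndepFun Y ℙ := by
  rw [iIndepFun_iff_measure_inter_preimage_eq_mul] at h ⊢
  intro S sets hsets
  have hall : ∀ᵐ ω ∂ℙ, ∀ i, X i ω = Y i ω := ae_all_iff.2 fun i => hae i
  have h1 : ℙ (⋂ i ∈ S, Y i ⁻¹' sets i) = ℙ (⋂ i ∈ S, X i ⁻¹' sets i) := by
    apply measure_congr
    rw [Filter.eventuallyEq_set]
    filter_upwards [hall] with ω hω
    simp only [Set.mem_iInter, Set.mem_preimage]
    constructor
    · intro h2 i hi; rw [hω i]; exact h2 i hi
    · intro h2 i hi; rw [← hω i]; exact h2 i hi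
  rw [h1, h S hsets]
  apply Finset.prod_congr rfl
  intro i hi
  apply measure_congr
  rw [Filter.eventuallyEq_set]
  filter_upwards [hae i] with ω hω
  simp [Set.mem_preimage, hω]


end AuxiliaryLemmas

def dotp {n : ℕ} (a v : Fin n → ℝ) : ℝ := ∑ i, a i * v i

theorem expected_square_bilinear {K N : ℕ} {Ω : Type*} [MeasureSpace Ω]
    [IsProbabilityMeasure (ℙ : Measure Ω)]
    (b : Ω → Fin K → ℝ) (c : Ω → Fin N → ℝ)
    (hindep : iIndepFun
      (fun p : Fin K ⊕ Fin N => fun ω => Sum.elim (b ω) (c ω) p) ℙ)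
    (hdist : ∀ p : Fin K ⊕ Fin N,
      Measure.map (fun ω => Sum.elim (b ω) (c ω) p) ℙ = gaussianReal 0 1)
    (hh δh : Fin K → ℝ) (mh δm : Fin N → ℝ) :
    (∫ ω, (dotp (b ω) hh * dotp (c ω) δm + dotp (b ω) δh * dotp (c ω) mh) ^ 2 ∂ℙ =
      (∑ j, (δm j) ^ 2) * (∑ i, (hh i) ^ 2) + (∑ j, (mh j) ^ 2) * (∑ i, (δh i) ^ 2)
        + 2 * (dotp δm mh) * (dotp δh hh)) ∧
    (dotp δh hh = dotp δm mh →
      (∫ ω, (dotp (b ω) hh * dotp (c ω) δm + dotp (b ω) δh * dotp (c ω) mh) ^ 2 ∂ℙ ≥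
        min (∑ i, (hh i) ^ 2) (∑ j, (mh j) ^ 2) * ((∑ i, (δh i) ^ 2) + ∑ j, (δm j) ^ 2))) := by
  classical
  set X : Fin K ⊕ Fin N → Ω → ℝ := fun p ω => Sum.elim (b ω) (c ω) p with hXdef
  have haem : ∀ p, AEMeasurable (X p) ℙ := by
    intro p
    by_contra hc
    have h0 := hdist p
    rw [show (fun ω => Sum.elim (b ω) (c ω) p) = X p from rfl] at h0
    rw [Measure.map_of_not_aemeasurable hc] at h0
    exact (IsProbabilityMeasure.ne_zero (gaussianReal 0 1)) h0.symm
  set Y : Fin K ⊕ Fin N → Ω → ℝ := fun p => (haem p).mk (X p) with hYdef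
  have hYmeas : ∀ p, Measurable (Y p) := fun p => (haem p).measurable_mk
  have hae : ∀ p, X p =ᵐ[ℙ] Y p := fun p => (haem p).ae_eq_mk
  have hYdist : ∀ p, Measure.map (Y p) ℙ = gaussianReal 0 1 := by
    intro p
    rw [← Measure.map_congr (hae p)]
    exact hdist p
  have hYindep : iIndepFun Y ℙ := iIndepFun_congr hindep hae
  -- integrability and moments of single variables
  have hInt : ∀ p, Integrable (Y p) ℙ := by
    intro p
    have h1 : Integrable (fun x : ℝ => x) (Measure.map (Y p) ℙ) := by
      rw [hYdist p]; exact gauss01_integrable_id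
    exact (integrable_map_measure aestronglyMeasurable_id (hYmeas p).aemeasurable).mp h1
  have hIntSq : ∀ p, Integrable (fun ω => Y p ω * Y p ω) ℙ := by
    intro p
    have h1 : Integrable (fun x : ℝ => x * x) (Measure.map (Y p) ℙ) := by
      rw [hYdist p]; exact gauss01_integrable_sq
    exact (integrable_map_measure (measurable_id.mul measurable_id).aestronglyMeasurable
      (hYmeas p).aemeasurable).mp h1
  have hMean : ∀ p, ∫ ω, Y p ω ∂ℙ = 0 := by
    intro p
    have h1 : ∫ ω, Y p ω ∂ℙ = ∫ x, x ∂(Measure.map (Y p) ℙ) :=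
      (integral_map (hYmeas p).aemeasurable aestronglyMeasurable_id).symm
    rw [h1, hYdist p, gauss01_mean]
  -- pairwise products
  have hpair : ∀ p q, Integrable (fun ω => Y p ω * Y q ω) ℙ := by
    intro p q
    by_cases hpq : p = q
    · subst hpq; exact hIntSq p
    · exact (hYindep.indepFun hpq).integrable_mul (hInt p) (hInt q)
  have hkey : ∀ p q, ∫ ω, Y p ω * Y q ω ∂ℙ = if p = q then 1 else 0 := by
    intro p q
    by_cases hpq : p = q
    · subst hpq
      rw [if_pos rfl]
      have h1 : ∫ ω, Y p ω * Y p ω ∂ℙ = ∫ x, x * x ∂(Measure.map (Y p) ℙ) :=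
        (integral_map (hYmeas p).aemeasurable (measurable_id.mul measurable_id).aestronglyMeasurable).symm
      rw [h1, hYdist p, gauss01_sq]
    · rw [if_neg hpq]
      have := (hYindep.indepFun hpq).integral_mul_eq_mul_integral (hInt p).aestronglyMeasurable (hInt q).aestronglyMeasurable
      have h2 : ∫ ω, Y p ω * Y q ω ∂ℙ = (∫ ω, Y p ω ∂ℙ) * ∫ ω, Y q ω ∂ℙ := this
      rw [h2, hMean p, hMean q, mul_zero]
  -- group independence
  have hgrp : ∀ (i i' : Fin K) (j j' : Fin N),
      IndepFun (fun ω => Y (Sum.inl i) ω * Y (Sum.inl i') ω)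
        (fun ω => Y (Sum.inr j) ω * Y (Sum.inr j') ω) ℙ := by
    intro i i' j j'
    have h1 := hYindep.indepFun_prodMk_prodMk hYmeas (Sum.inl i) (Sum.inl i')
      (Sum.inr j) (Sum.inr j') (by simp) (by simp) (by simp) (by simp)
    exact h1.comp (measurable_fst.mul measurable_snd) (measurable_fst.mul measurable_snd)
  have hprodInt : ∀ (i i' : Fin K) (j j' : Fin N),
      Integrable (fun ω => (Y (Sum.inl i) ω * Y (Sum.inl i') ω)
        * (Y (Sum.inr j) ω * Y (Sum.inr j') ω)) ℙ := by
    intro i i' j j'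
    exact (hgrp i i' j j').integrable_mul (hpair _ _) (hpair _ _)
  have hcross : ∀ (i i' : Fin K) (j j' : Fin N),
      ∫ ω, (Y (Sum.inl i) ω * Y (Sum.inl i') ω) * (Y (Sum.inr j) ω * Y (Sum.inr j') ω) ∂ℙ
        = (if i = i' then (1:ℝ) else 0) * (if j = j' then (1:ℝ) else 0) := by
    intro i i' j j'
    have h1 := (hgrp i i' j j').integral_mul_eq_mul_integral (hpair _ _).aestronglyMeasurable (hpair _ _).aestronglyMeasurable
    have h2 : ∫ ω, (Y (Sum.inl i) ω * Y (Sum.inl i') ω)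
        * (Y (Sum.inr j) ω * Y (Sum.inr j') ω) ∂ℙ
        = (∫ ω, Y (Sum.inl i) ω * Y (Sum.inl i') ω ∂ℙ)
          * ∫ ω, Y (Sum.inr j) ω * Y (Sum.inr j') ω ∂ℙ := h1
    rw [h2, hkey, hkey]
    simp
  -- main computation
  set A : Fin K → Fin N → ℝ := fun i j => hh i * δm j + δh i * mh j with hAdef
  set f : Fin K × Fin N → Ω → ℝ :=
    fun p ω => Y (Sum.inl p.1) ω * Y (Sum.inr p.2) ω * A p.1 p.2 with hfdef
  have haeall : ∀ᵐ ω ∂ℙ, ∀ p, X p ω = Y p ω := ae_all_iff.2 fun p => hae p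
  have hstep1 : ∫ ω, (dotp (b ω) hh * dotp (c ω) δm + dotp (b ω) δh * dotp (c ω) mh) ^ 2 ∂ℙ
      = ∫ ω, (∑ p : Fin K × Fin N, f p ω) ^ 2 ∂ℙ := by
    apply integral_congr_ae
    filter_upwards [haeall] with ω hω
    have hb' : ∀ i, b ω i = Y (Sum.inl i) ω := fun i => hω (Sum.inl i)
    have hc' : ∀ j, c ω j = Y (Sum.inr j) ω := fun j => hω (Sum.inr j)
    have hbase : dotp (b ω) hh * dotp (c ω) δm + dotp (b ω) δh * dotp (c ω) mh
        = ∑ p : Fin K × Fin N, f p ω := by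
      simp only [dotp, hfdef, Fintype.sum_prod_type, Finset.sum_mul_sum,
        ← Finset.sum_add_distrib]
      refine Finset.sum_congr rfl fun i _ => Finset.sum_congr rfl fun j _ => ?_
      rw [hb' i, hc' j, hAdef]
      ring
    rw [hbase]
  have hsq : ∀ ω, (∑ p : Fin K × Fin N, f p ω) ^ 2
      = ∑ p : Fin K × Fin N, ∑ q : Fin K × Fin N, f p ω * f q ω := by
    intro ω
    rw [sq, Finset.sum_mul_sum]
  have hfint : ∀ p q : Fin K × Fin N, Integrable (fun ω => f p ω * f q ω) ℙ := by
    intro p q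
    have heq : (fun ω => f p ω * f q ω) = fun ω => (A p.1 p.2 * A q.1 q.2)
        * ((Y (Sum.inl p.1) ω * Y (Sum.inl q.1) ω)
          * (Y (Sum.inr p.2) ω * Y (Sum.inr q.2) ω)) := by
      funext ω; simp only [hfdef]; ring
    rw [heq]
    exact (hprodInt _ _ _ _).const_mul _
  have hterm : ∀ p q : Fin K × Fin N, ∫ ω, f p ω * f q ω ∂ℙ
      = A p.1 p.2 * A q.1 q.2
        * ((if p.1 = q.1 then (1:ℝ) else 0) * (if p.2 = q.2 then (1:ℝ) else 0)) := by
    intro p q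
    have heq : (fun ω => f p ω * f q ω) = fun ω => (A p.1 p.2 * A q.1 q.2)
        * ((Y (Sum.inl p.1) ω * Y (Sum.inl q.1) ω)
          * (Y (Sum.inr p.2) ω * Y (Sum.inr q.2) ω)) := by
      funext ω; simp only [hfdef]; ring
    rw [heq, integral_const_mul, hcross]
  have hstep2 : ∫ ω, (∑ p : Fin K × Fin N, f p ω) ^ 2 ∂ℙ
      = ∑ p : Fin K × Fin N, (A p.1 p.2) ^ 2 := by
    simp_rw [hsq]
    rw [integral_finset_sum _ (fun p _ => integrable_finset_sum _ (fun q _ => hfint p q))]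
    have : ∀ p : Fin K × Fin N, ∫ ω, ∑ q : Fin K × Fin N, f p ω * f q ω ∂ℙ
        = ∑ q : Fin K × Fin N, ∫ ω, f p ω * f q ω ∂ℙ :=
      fun p => integral_finset_sum _ (fun q _ => hfint p q)
    rw [Finset.sum_congr rfl fun p _ => this p]
    refine Finset.sum_congr rfl fun p _ => ?_
    rw [Finset.sum_congr rfl fun q _ => hterm p q]
    have hite : ∀ q : Fin K × Fin N, A p.1 p.2 * A q.1 q.2
        * ((if p.1 = q.1 then (1:ℝ) else 0) * (if p.2 = q.2 then (1:ℝ) else 0))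
        = if p = q then (A p.1 p.2) ^ 2 else 0 := by
      intro q
      by_cases hpq : p = q
      · subst hpq; simp [sq]
      · rw [if_neg hpq]
        by_cases h1 : p.1 = q.1
        · have h2 : ¬ p.2 = q.2 := fun h => hpq (Prod.ext h1 h)
          simp [h1, h2]
        · simp [h1]
    rw [Finset.sum_congr rfl fun q _ => hite q]
    simp
  have hstep3 : ∑ p : Fin K × Fin N, (A p.1 p.2) ^ 2
      = (∑ j, (δm j) ^ 2) * (∑ i, (hh i) ^ 2) + (∑ j, (mh j) ^ 2) * (∑ i, (δh i) ^ 2)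
        + 2 * (dotp δm mh) * (dotp δh hh) := by
    have hprod : ∀ (u : Fin N → ℝ) (v : Fin K → ℝ),
        (∑ j, u j) * (∑ i, v i) = ∑ i, ∑ j, u j * v i := by
      intro u v
      rw [Finset.sum_mul_sum]
      apply Finset.sum_comm
    rw [Fintype.sum_prod_type]
    rw [hprod (fun j => (δm j) ^ 2) (fun i => (hh i) ^ 2),
      hprod (fun j => (mh j) ^ 2) (fun i => (δh i) ^ 2)]
    have h2c : 2 * (dotp δm mh) * (dotp δh hh)
        = ∑ i, ∑ j, 2 * (δm j * mh j) * (δh i * hh i) := by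
      simp only [dotp]
      rw [mul_assoc, hprod (fun j => δm j * mh j) (fun i => δh i * hh i), Finset.mul_sum]
      refine Finset.sum_congr rfl fun i _ => ?_
      rw [Finset.mul_sum]
      refine Finset.sum_congr rfl fun j _ => by ring
    rw [h2c, ← Finset.sum_add_distrib, ← Finset.sum_add_distrib]
    refine Finset.sum_congr rfl fun i _ => ?_
    rw [← Finset.sum_add_distrib, ← Finset.sum_add_distrib]
    refine Finset.sum_congr rfl fun j _ => ?_
    simp only [hAdef]
    ring
  have hmain := hstep1.trans (hstep2.trans hstep3)
  refine ⟨hmain, ?_⟩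
  intro he
  rw [hmain, ge_iff_le, he]
  have hH : (0:ℝ) ≤ ∑ i, (hh i) ^ 2 := Finset.sum_nonneg fun i _ => sq_nonneg _
  have hM : (0:ℝ) ≤ ∑ j, (mh j) ^ 2 := Finset.sum_nonneg fun j _ => sq_nonneg _
  have hDh : (0:ℝ) ≤ ∑ i, (δh i) ^ 2 := Finset.sum_nonneg fun i _ => sq_nonneg _
  have hDm : (0:ℝ) ≤ ∑ j, (δm j) ^ 2 := Finset.sum_nonneg fun j _ => sq_nonneg _
  have h1 : min (∑ i, (hh i) ^ 2) (∑ j, (mh j) ^ 2) ≤ ∑ i, (hh i) ^ 2 := min_le_left _ _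
  have h2 : min (∑ i, (hh i) ^ 2) (∑ j, (mh j) ^ 2) ≤ ∑ j, (mh j) ^ 2 := min_le_right _ _
  nlinarith [mul_le_mul_of_nonneg_right h1 hDm, mul_le_mul_of_nonneg_right h2 hDh,
    mul_self_nonneg (dotp δm mh)]


end
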